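/- Let 1 ≤ q < ∞ and 0 < p ≤ q. If 0 ≤ ε ≤ t₁ then E(W^T_q, I_{ε,p}) = E(W^T_q, I_{ε,p}, id) = ε, where id is the identity method Φ(a) = a; and if ε > t₁ then E(W^T_q, I_{ε,p}) = E(W^T_q, I_{ε,p}, Φ*_0) = t₁. -/

import Mathlib

open scoped ENNReal NNReal BigOperators

/-- The `ℓ_q` (quasi-)norm `(∑ |x_k|^q)^{1/q}` of a complex sequence, valued in `ℝ≥0∞`. -/
noncomputable def lqNorm (q : ℝ) (x : ℕ → ℂ) : ℝ≥0∞ :=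
  (∑' k, (‖x k‖₊ : ℝ≥0∞) ^ q) ^ (1 / q)

/-- The class `W^T_q = {Th : h ∈ ℓ_q, ‖h‖_q ≤ 1}`, where `T` is the diagonal operator
determined by the sequence `t` (0-based indexing: `t k` is the paper's `t_{k+1}`). -/
def WT (q : ℝ) (t : ℕ → ℝ) : Set (ℕ → ℂ) :=
  {x | ∃ h : ℕ → ℂ, (∀ k, x k = (t k : ℂ) * h k) ∧ lqNorm q h ≤ 1}

/-- The error `E(W, I, Φ) = sup_{x ∈ W} sup_{a ∈ I x} ‖x - Φ a‖_q` of a recovery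
method `Φ`, measured in `ℓ_q`. -/
noncomputable def recErr {Z : Type*} (q : ℝ) (W : Set (ℕ → ℂ))
    (I : (ℕ → ℂ) → Set Z) (Φ : Z → ℕ → ℂ) : ℝ≥0∞ :=
  ⨆ x ∈ W, ⨆ a ∈ I x, lqNorm q (fun k => x k - Φ a k)

/-- The error of optimal recovery `E(W, I) = inf_Φ E(W, I, Φ)`. -/
noncomputable def optErr {Z : Type*} (q : ℝ) (W : Set (ℕ → ℂ))
    (I : (ℕ → ℂ) → Set Z) : ℝ≥0∞ :=
  ⨅ Φ : Z → ℕ → ℂ, recErr q W I Φ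

/-- The method `Φ*_m(a) = (a_1(1 − t_{m+1}^q/t_1^q), …, a_m(1 − t_{m+1}^q/t_m^q), 0, …)`
for information consisting of the first `n` coordinates (0-based: `t m` is the paper's
`t_{m+1}`); `PhiStar q t n 0` is the zero method `Φ*_0`. -/
noncomputable def PhiStar (q : ℝ) (t : ℕ → ℝ) (n m : ℕ) (a : Fin n → ℂ) : ℕ → ℂ :=
  fun k => if h : k < n ∧ k < m then ((1 - t m ^ q / t k ^ q : ℝ) : ℂ) * a ⟨k, h.1⟩ else 0

/-- The information mapping `I_{ε,p}(x) = x + B[ε, ℓ_p] = {a : ‖x − a‖_{ℓ_p} ≤ ε}`. -/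
def infoLpFull (p ε : ℝ) (x : ℕ → ℂ) : Set (ℕ → ℂ) :=
  {a | lqNorm p (fun k => x k - a k) ≤ ENNReal.ofReal ε}

section helpers

variable {q p : ℝ}


lemma lqNorm_rpow (hq : 0 < q) (f : ℕ → ℂ) :
    (lqNorm q f) ^ q = ∑' k, (‖f k‖₊ : ℝ≥0∞) ^ q := by
  rw [lqNorm, ← ENNReal.rpow_mul, one_div, inv_mul_cancel₀ hq.ne', ENNReal.rpow_one]

lemma rpow_one_div_self (hq : 0 < q) (a : ℝ≥0∞) : (a ^ q) ^ (1/q) = a := by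
  rw [← ENNReal.rpow_mul, mul_one_div_cancel hq.ne', ENNReal.rpow_one]

lemma lqNorm_zero (hq : 0 < q) : lqNorm q (fun _ => (0:ℂ)) = 0 := by
  simp [lqNorm, ENNReal.zero_rpow_of_pos hq, ENNReal.zero_rpow_of_pos (by positivity : (0:ℝ) < 1/q), hq]

lemma lqNorm_single (hq : 0 < q) (c : ℂ) :
    lqNorm q (fun k => if k = 0 then c else 0) = (‖c‖₊ : ℝ≥0∞) := by
  have : ∑' k, (‖(if k = 0 then c else 0)‖₊ : ℝ≥0∞) ^ q = (‖c‖₊ : ℝ≥0∞) ^ q := by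
    rw [tsum_eq_single 0]
    · simp
    · intro b hb; simp [hb, ENNReal.zero_rpow_of_pos hq]
  rw [lqNorm, this, rpow_one_div_self hq]

lemma coord_le_lqNorm (hq : 0 < q) (f : ℕ → ℂ) (k : ℕ) :
    (‖f k‖₊ : ℝ≥0∞) ≤ lqNorm q f := by
  have h1 : (‖f k‖₊ : ℝ≥0∞) ^ q ≤ ∑' j, (‖f j‖₊ : ℝ≥0∞) ^ q := ENNReal.le_tsum k
  calc (‖f k‖₊ : ℝ≥0∞) = ((‖f k‖₊ : ℝ≥0∞) ^ q) ^ (1/q) := (rpow_one_div_self hq _).symm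
    _ ≤ lqNorm q f := ENNReal.rpow_le_rpow h1 (by positivity)

lemma lqNorm_mono_exp (hp : 0 < p) (hpq : p ≤ q) (f : ℕ → ℂ) :
    lqNorm q f ≤ lqNorm p f := by
  have hq : 0 < q := hp.trans_le hpq
  set S := lqNorm p f with hS
  rcases eq_or_ne S ⊤ with h | htop
  · simp [h]
  rcases eq_or_ne S 0 with h0 | h0
  · have hf : ∀ k, f k = 0 := by
      intro k
      have := coord_le_lqNorm hp f k
      rw [← hS, h0, le_zero_iff] at this
      simpa using this
    have : lqNorm q f = lqNorm q (fun _ => (0:ℂ)) := by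
      congr 1; funext k; exact hf k
    rw [this, lqNorm_zero hq, h0]
  have hsum : ∑' k, (‖f k‖₊ : ℝ≥0∞) ^ p = S ^ p := (lqNorm_rpow hp f).symm
  have hle : ∀ k, (‖f k‖₊ : ℝ≥0∞) ≤ S := fun k => coord_le_lqNorm hp f k
  have key : ∑' k, (‖f k‖₊ : ℝ≥0∞) ^ q ≤ S ^ q := by
    have step : ∀ k, (‖f k‖₊ : ℝ≥0∞) ^ q ≤ (‖f k‖₊ : ℝ≥0∞) ^ p * S ^ (q - p) := by
      intro k
      rcases eq_or_ne (‖f k‖₊ : ℝ≥0∞) 0 with hz | hz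
      · rw [hz, ENNReal.zero_rpow_of_pos hq]; exact zero_le
      · have hq' : q = p + (q - p) := by ring
        rw [hq', ENNReal.rpow_add _ _ hz ENNReal.coe_ne_top, ← hq']
        exact mul_le_mul_right (ENNReal.rpow_le_rpow (hle k) (sub_nonneg.2 hpq)) _
    calc ∑' k, (‖f k‖₊ : ℝ≥0∞) ^ q
        ≤ ∑' k, (‖f k‖₊ : ℝ≥0∞) ^ p * S ^ (q - p) := ENNReal.tsum_le_tsum step
      _ = (∑' k, (‖f k‖₊ : ℝ≥0∞) ^ p) * S ^ (q - p) := ENNReal.tsum_mul_right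
      _ = S ^ p * S ^ (q - p) := by rw [hsum]
      _ = S ^ q := by rw [← ENNReal.rpow_add _ _ h0 htop]; ring_nf
  calc lqNorm q f = (∑' k, (‖f k‖₊ : ℝ≥0∞) ^ q) ^ (1/q) := rfl
    _ ≤ (S ^ q) ^ (1/q) := ENNReal.rpow_le_rpow key (by positivity)
    _ = S := rpow_one_div_self hq _

lemma mem_WT_single (hq : 0 < q) (t : ℕ → ℝ) (htpos : ∀ k, 0 < t k)
    (c : ℂ) (hc : ‖c‖ ≤ t 0) :
    (fun k => if k = 0 then c else 0) ∈ WT q t := by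
  refine ⟨fun k => if k = 0 then c / (t 0 : ℂ) else 0, fun k => ?_, ?_⟩
  · by_cases hk : k = 0
    · subst hk
      simp only [if_pos rfl, ↓reduceIte]
      have ht0 : ((t 0 : ℝ) : ℂ) ≠ 0 := by
        exact_mod_cast Complex.ofReal_ne_zero.2 (htpos 0).ne'
      field_simp
    · simp [hk]
  · rw [lqNorm_single hq]
    have ht0 : (0:ℝ) < t 0 := htpos 0
    have : ‖c / (t 0 : ℂ)‖₊ ≤ 1 := by
      rw [← NNReal.coe_le_coe, coe_nnnorm]
      rw [norm_div, Complex.norm_real, Real.norm_of_nonneg ht0.le]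
      rw [NNReal.coe_one, div_le_one ht0]
      exact hc
    exact_mod_cast this

lemma WT_lqNorm_le (hq : 0 < q) (t : ℕ → ℝ) (htpos : ∀ k, 0 < t k)
    (htmono : Antitone t) {x : ℕ → ℂ} (hx : x ∈ WT q t) :
    lqNorm q x ≤ ENNReal.ofReal (t 0) := by
  obtain ⟨h, hxh, hh⟩ := hx
  have hsum : ∑' k, (‖h k‖₊ : ℝ≥0∞) ^ q ≤ 1 := by
    have := ENNReal.rpow_le_rpow hh hq.le
    rwa [lqNorm_rpow hq, ENNReal.one_rpow] at this
  have key : ∑' k, (‖x k‖₊ : ℝ≥0∞) ^ q ≤ (ENNReal.ofReal (t 0)) ^ q := by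
    have step : ∀ k, (‖x k‖₊ : ℝ≥0∞) ^ q ≤ (ENNReal.ofReal (t 0)) ^ q * (‖h k‖₊ : ℝ≥0∞) ^ q := by
      intro k
      rw [hxh k]
      have : (‖(t k : ℂ) * h k‖₊ : ℝ≥0∞) = (‖(t k : ℂ)‖₊ : ℝ≥0∞) * (‖h k‖₊ : ℝ≥0∞) := by
        rw [nnnorm_mul]; push_cast; ring
      rw [this, ENNReal.mul_rpow_of_nonneg _ _ hq.le]
      refine mul_le_mul_left (ENNReal.rpow_le_rpow ?_ hq.le) _
      have : (‖(t k : ℂ)‖₊ : ℝ≥0∞) = ENNReal.ofReal (t k) := by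
        rw [Complex.nnnorm_real, ← enorm_eq_nnnorm, Real.enorm_eq_ofReal (htpos k).le]
      rw [this]
      exact ENNReal.ofReal_le_ofReal (htmono (Nat.zero_le k))
    calc ∑' k, (‖x k‖₊ : ℝ≥0∞) ^ q
        ≤ ∑' k, (ENNReal.ofReal (t 0)) ^ q * (‖h k‖₊ : ℝ≥0∞) ^ q := ENNReal.tsum_le_tsum step
      _ = (ENNReal.ofReal (t 0)) ^ q * ∑' k, (‖h k‖₊ : ℝ≥0∞) ^ q := ENNReal.tsum_mul_left
      _ ≤ (ENNReal.ofReal (t 0)) ^ q * 1 := mul_le_mul_right hsum _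
      _ = (ENNReal.ofReal (t 0)) ^ q := mul_one _
  calc lqNorm q x ≤ ((ENNReal.ofReal (t 0)) ^ q) ^ (1/q) := ENNReal.rpow_le_rpow key (by positivity)
    _ = ENNReal.ofReal (t 0) := rpow_one_div_self hq _

end helpers

lemma le_recErr {Z : Type*} (q : ℝ) (W : Set (ℕ → ℂ)) (I : (ℕ → ℂ) → Set Z)
    (Φ : Z → ℕ → ℂ) {x : ℕ → ℂ} (hx : x ∈ W) {a : Z} (ha : a ∈ I x) :
    lqNorm q (fun k => x k - Φ a k) ≤ recErr q W I Φ :=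
  le_iSup₂_of_le x hx (le_iSup₂_of_le a ha le_rfl)

/-- Theorem 6: optimal recovery of `W^T_q`, `1 ≤ q < ∞`, from the whole
sequence known with an error measured in `ℓ_p`, `0 < p ≤ q`.  For `0 ≤ ε ≤ t₁` the
identity method is optimal with error `ε`; for `ε > t₁` the zero method `Φ*_0` is
optimal with error `t₁` (0-based: `t 0` is the paper's `t₁`). -/
theorem optimal_recovery_full_lp_error_small_p
    (q : ℝ) (hq : 1 ≤ q) (p : ℝ) (hp : 0 < p) (hpq : p ≤ q)
    (t : ℕ → ℝ) (htpos : ∀ k, 0 < t k) (htmono : Antitone t)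
    (ε : ℝ) (hε : 0 ≤ ε) :
    (ε ≤ t 0 →
      optErr q (WT q t) (infoLpFull p ε) =
        recErr q (WT q t) (infoLpFull p ε) (fun a => a) ∧
      recErr q (WT q t) (infoLpFull p ε) (fun a => a) = ENNReal.ofReal ε) ∧
    (t 0 < ε →
      optErr q (WT q t) (infoLpFull p ε) =
        recErr q (WT q t) (infoLpFull p ε) (fun _ _ => 0) ∧
      recErr q (WT q t) (infoLpFull p ε) (fun _ _ => 0) = ENNReal.ofReal (t 0)) := by
  have hq0 : (0:ℝ) < q := lt_of_lt_of_le one_pos hq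
  -- every x belongs to its own information set
  have hmemI_self : ∀ x : ℕ → ℂ, x ∈ infoLpFull p ε x := by
    intro x
    show lqNorm p (fun k => x k - x k) ≤ _
    simp only [sub_self]
    rw [lqNorm_zero hp]
    exact zero_le
  -- the lqNorm of a single-coordinate real sequence
  have hsingle : ∀ r : ℝ, ∀ s : ℝ, 0 < s → 0 ≤ r →
      lqNorm s (fun k => if k = 0 then (r:ℂ) else 0) = ENNReal.ofReal r := by
    intro r s hs hr
    rw [lqNorm_single hs, Complex.nnnorm_real, ← enorm_eq_nnnorm, Real.enorm_eq_ofReal hr]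
  -- lower bound for the optimal error
  have lower : ∀ c : ℝ, 0 ≤ c → c ≤ t 0 → c ≤ ε →
      ENNReal.ofReal c ≤ optErr q (WT q t) (infoLpFull p ε) := by
    intro c hc0 hct hcε
    refine le_iInf fun Φ => ?_
    have hxp : (fun k => if k = 0 then ((c:ℝ):ℂ) else 0) ∈ WT q t :=
      mem_WT_single hq0 t htpos _
        (by rw [Complex.norm_real, Real.norm_of_nonneg hc0]; exact hct)
    have hxm : (fun k => if k = 0 then (((-c):ℝ):ℂ) else 0) ∈ WT q t :=
      mem_WT_single hq0 t htpos _
        (by rw [Complex.norm_real, norm_neg, Real.norm_of_nonneg hc0]; exact hct)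
    have h0p : (fun _ : ℕ => (0:ℂ)) ∈ infoLpFull p ε (fun k => if k = 0 then ((c:ℝ):ℂ) else 0) := by
      show lqNorm p _ ≤ _
      simp only [sub_zero]
      rw [hsingle c p hp hc0]
      exact ENNReal.ofReal_le_ofReal hcε
    have h0m : (fun _ : ℕ => (0:ℂ)) ∈ infoLpFull p ε (fun k => if k = 0 then (((-c):ℝ):ℂ) else 0) := by
      show lqNorm p _ ≤ _
      simp only [sub_zero]
      rw [lqNorm_single hp]
      have : (‖(((-c):ℝ):ℂ)‖₊ : ℝ≥0∞) = ENNReal.ofReal c := by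
        rw [Complex.nnnorm_real]
        push_cast
        rw [nnnorm_neg, ← enorm_eq_nnnorm, Real.enorm_eq_ofReal hc0]
      rw [this]
      exact ENNReal.ofReal_le_ofReal hcε
    set y := Φ (fun _ => 0) 0 with hy
    have cA : (‖((c:ℝ):ℂ) - y‖₊ : ℝ≥0∞) ≤ recErr q (WT q t) (infoLpFull p ε) Φ := by
      refine le_trans ?_ (le_recErr q _ _ Φ hxp h0p)
      have := coord_le_lqNorm hq0
        (fun k => (fun k => if k = 0 then ((c:ℝ):ℂ) else 0) k - Φ (fun _ => 0) k) 0
      simpa using this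
    have cB : (‖(((-c):ℝ):ℂ) - y‖₊ : ℝ≥0∞) ≤ recErr q (WT q t) (infoLpFull p ε) Φ := by
      refine le_trans ?_ (le_recErr q _ _ Φ hxm h0m)
      have := coord_le_lqNorm hq0
        (fun k => (fun k => if k = 0 then (((-c):ℝ):ℂ) else 0) k - Φ (fun _ => 0) k) 0
      simpa using this
    have tri : ENNReal.ofReal (2*c) ≤
        (‖((c:ℝ):ℂ) - y‖₊ : ℝ≥0∞) + (‖(((-c):ℝ):ℂ) - y‖₊ : ℝ≥0∞) := by
      rw [← enorm_eq_nnnorm, ← enorm_eq_nnnorm, ← ofReal_norm, ← ofReal_norm,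
          ← ENNReal.ofReal_add (norm_nonneg _) (norm_nonneg _)]
      apply ENNReal.ofReal_le_ofReal
      have h2 : (((c:ℝ):ℂ) - y) - ((((-c):ℝ):ℂ) - y) = ((2*c : ℝ) : ℂ) := by
        push_cast; ring
      calc 2*c = ‖(((c:ℝ):ℂ) - y) - ((((-c):ℝ):ℂ) - y)‖ := by
            rw [h2, Complex.norm_real, Real.norm_of_nonneg (by linarith)]
        _ ≤ ‖((c:ℝ):ℂ) - y‖ + ‖(((-c):ℝ):ℂ) - y‖ := norm_sub_le _ _
    have h2r : ENNReal.ofReal (2*c) = 2 * ENNReal.ofReal c := by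
      rw [ENNReal.ofReal_mul (by norm_num : (0:ℝ) ≤ 2)]
      norm_num
    have key : 2 * ENNReal.ofReal c ≤ 2 * recErr q (WT q t) (infoLpFull p ε) Φ := by
      calc 2 * ENNReal.ofReal c = ENNReal.ofReal (2*c) := h2r.symm
        _ ≤ _ + _ := tri
        _ ≤ recErr q (WT q t) (infoLpFull p ε) Φ + recErr q (WT q t) (infoLpFull p ε) Φ :=
            add_le_add cA cB
        _ = 2 * recErr q (WT q t) (infoLpFull p ε) Φ := (two_mul _).symm
    exact (ENNReal.mul_le_mul_iff_right (by norm_num) (by norm_num)).1 key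
  -- upper bound for the identity method
  have upper_id : recErr q (WT q t) (infoLpFull p ε) (fun a => a) ≤ ENNReal.ofReal ε := by
    rw [recErr]
    refine iSup₂_le fun x hx => iSup₂_le fun a ha => ?_
    exact le_trans (lqNorm_mono_exp hp hpq _) ha
  -- upper bound for the zero method
  have upper_zero : recErr q (WT q t) (infoLpFull p ε) (fun _ _ => 0) ≤ ENNReal.ofReal (t 0) := by
    rw [recErr]
    refine iSup₂_le fun x hx => iSup₂_le fun a ha => ?_
    simp only [sub_zero]
    exact WT_lqNorm_le hq0 t htpos htmono hx
  constructor
  · intro hεt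
    have hxW : (fun k => if k = 0 then ((ε:ℝ):ℂ) else 0) ∈ WT q t :=
      mem_WT_single hq0 t htpos _
        (by rw [Complex.norm_real, Real.norm_of_nonneg hε]; exact hεt)
    have ha : (fun _ : ℕ => (0:ℂ)) ∈ infoLpFull p ε (fun k => if k = 0 then ((ε:ℝ):ℂ) else 0) := by
      show lqNorm p _ ≤ _
      simp only [sub_zero]
      rw [hsingle ε p hp hε]
    have lower_id : ENNReal.ofReal ε ≤ recErr q (WT q t) (infoLpFull p ε) (fun a => a) := by
      have := le_recErr q (WT q t) (infoLpFull p ε) (fun a => a) hxW ha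
      simp only [sub_zero] at this
      rwa [hsingle ε q hq0 hε] at this
    have heq : recErr q (WT q t) (infoLpFull p ε) (fun a => a) = ENNReal.ofReal ε :=
      le_antisymm upper_id lower_id
    refine ⟨le_antisymm (iInf_le _ _) ?_, heq⟩
    rw [heq]
    exact lower ε hε hεt le_rfl
  · intro hεt
    have hxW : (fun k => if k = 0 then ((t 0 :ℝ):ℂ) else 0) ∈ WT q t :=
      mem_WT_single hq0 t htpos _
        (by rw [Complex.norm_real, Real.norm_of_nonneg (htpos 0).le])
    have lower_zero : ENNReal.ofReal (t 0) ≤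
        recErr q (WT q t) (infoLpFull p ε) (fun _ _ => 0) := by
      have := le_recErr q (WT q t) (infoLpFull p ε) (fun _ _ => 0) hxW (hmemI_self _)
      simp only [sub_zero] at this
      rwa [hsingle (t 0) q hq0 (htpos 0).le] at this
    have heq : recErr q (WT q t) (infoLpFull p ε) (fun _ _ => 0) = ENNReal.ofReal (t 0) :=
      le_antisymm upper_zero lower_zero
    refine ⟨le_antisymm (iInf_le _ _) ?_, heq⟩
    rw [heq]
    exact lower (t 0) (htpos 0).le le_rfl hεt.le
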